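/- Let Q, P_1, …, P_K be probability measures on a measurable space, and let A_1, …, A_K be pairwise disjoint measurable sets. Then (1/K) Σ_{h=1}^K P_h(A_h) ≤ 1/K + √( (1/(2K)) Σ_{h=1}^K KL(Q ‖ P_h) ). -/

import Mathlib

open MeasureTheory ENNReal
open scoped Classical

/-- Kullback–Leibler divergence between measures: `∫ log(dμ/dν) dμ` when
`μ ≪ ν` and the log-likelihood ratio is `μ`-integrable, and `∞` otherwise. -/
noncomputable def klDiv {Ω : Type*} [MeasurableSpace Ω] (μ ν : Measure Ω) : ℝ≥0∞ :=
  if μ ≪ ν ∧ Integrable (llr μ ν) μ then ENNReal.ofReal (∫ ω, llr μ ν ω ∂μ) else ⊤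

open Real
open scoped NNReal

lemma one_sub_inv_le_log {x : ℝ} (hx : 0 < x) : 1 - 1/x ≤ Real.log x := by
  have h := Real.log_le_sub_one_of_pos (show (0:ℝ) < 1/x by positivity)
  rw [one_div, Real.log_inv] at h
  rw [one_div]
  linarith

lemma aux_h_mono : MonotoneOn (fun x : ℝ => (x+1) * Real.log x - 2*(x-1)) (Set.Ioi 0) := by
  have hd : ∀ x ∈ Set.Ioi (0:ℝ), HasDerivAt (fun x : ℝ => (x+1) * Real.log x - 2*(x-1))
      (Real.log x + 1/x - 1) x := by
    intro x hx
    have hx0 : x ≠ 0 := ne_of_gt hx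
    have h1 : HasDerivAt (fun x : ℝ => (x+1) * Real.log x) (1 * Real.log x + (x+1) * (1/x)) x :=
      ((hasDerivAt_id x).add_const 1).mul ((Real.hasDerivAt_log hx0).congr_deriv (by rw [one_div]))
    have h2 : HasDerivAt (fun x : ℝ => 2*(x-1)) 2 x := by
      simpa using ((hasDerivAt_id x).sub_const 1).const_mul 2
    have := h1.sub h2
    refine this.congr_deriv ?_
    field_simp
    ring
  have hmono := monotoneOn_of_deriv_nonneg (convex_Ioi (0:ℝ))
    (fun x hx => ((hd x hx).continuousAt.continuousWithinAt))
    (fun x hx => ((hd x (by simpa using hx)).differentiableAt.differentiableWithinAt))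
    (fun x hx => by
      rw [interior_Ioi] at hx
      rw [(hd x hx).deriv]
      have := one_sub_inv_le_log hx
      linarith)
  exact hmono

lemma g_deriv : ∀ x ∈ Set.Ioi (0:ℝ), HasDerivAt
    (fun x : ℝ => 2*(x+2)*(x*Real.log x - x + 1) - 3*(x-1)^2)
    (4 * ((x+1) * Real.log x - 2*(x-1))) x := by
  intro x hx
  have hx0 : x ≠ 0 := ne_of_gt hx
  have h1 : HasDerivAt (fun x : ℝ => x * Real.log x - x + 1) (Real.log x) x := by
    have := (Real.hasDerivAt_mul_log hx0).sub (hasDerivAt_id x)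
    simpa using this.add_const 1
  have h2 : HasDerivAt (fun x : ℝ => 2*(x+2)) 2 x := by
    simpa using ((hasDerivAt_id x).add_const 2).const_mul 2
  have h3 : HasDerivAt (fun x : ℝ => 3*(x-1)^2) (3*(2*(x-1))) x := by
    simpa using (((hasDerivAt_id x).sub_const 1).pow 2).const_mul 3
  have := (h2.mul h1).sub h3
  refine this.congr_deriv ?_
  ring

lemma key_ineq {x : ℝ} (hx : 0 ≤ x) :
    3*(x-1)^2 ≤ 2*(x+2)*(x*Real.log x - x + 1) := by
  rcases eq_or_lt_of_le hx with h0 | hx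
  · simp [← h0]
    norm_num
  set g : ℝ → ℝ := fun x : ℝ => 2*(x+2)*(x*Real.log x - x + 1) - 3*(x-1)^2 with hg
  have hcont : Continuous g := by
    have := Real.continuous_mul_log
    fun_prop
  have hg1 : g 1 = 0 := by simp [hg]
  have hge : 0 ≤ g x := by
    rcases le_or_gt x 1 with hx1 | hx1
    · have hanti : AntitoneOn g (Set.Ioc 0 1) := by
        refine antitoneOn_of_deriv_nonpos (convex_Ioc 0 1) hcont.continuousOn
          (fun y hy => (g_deriv y (Set.mem_Ioi.2 (by rw [interior_Ioc] at hy; exact hy.1))).differentiableAt.differentiableWithinAt) ?_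
        intro y hy
        rw [interior_Ioc] at hy
        rw [(g_deriv y (Set.mem_Ioi.2 hy.1)).deriv]
        have := aux_h_mono (Set.mem_Ioi.2 hy.1) (Set.mem_Ioi.2 one_pos) hy.2.le
        simp only [Real.log_one] at this
        linarith
      have := hanti (Set.mem_Ioc.2 ⟨hx, hx1⟩) (Set.mem_Ioc.2 ⟨one_pos, le_refl 1⟩) hx1
      rw [hg1] at this; linarith
    · have hmono : MonotoneOn g (Set.Ici 1) := by
        refine monotoneOn_of_deriv_nonneg (convex_Ici 1) hcont.continuousOn
          (fun y hy => (g_deriv y (Set.mem_Ioi.2 (lt_trans one_pos (by rwa [interior_Ici] at hy)))).differentiableAt.differentiableWithinAt) ?_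
        intro y hy
        rw [interior_Ici] at hy
        have hy0 : (0:ℝ) < y := lt_trans one_pos hy
        rw [(g_deriv y (Set.mem_Ioi.2 hy0)).deriv]
        have := aux_h_mono (Set.mem_Ioi.2 one_pos) (Set.mem_Ioi.2 hy0) hy.le
        simp only [Real.log_one] at this
        linarith
      have := hmono (Set.mem_Ici.2 le_rfl) (Set.mem_Ici.2 hx1.le) hx1.le
      rw [hg1] at this; linarith
  simpa [hg] using hge

lemma phi_nonneg {x : ℝ} (hx : 0 ≤ x) : 0 ≤ x * Real.log x - x + 1 := by
  nlinarith [key_ineq hx, sq_nonneg (x-1)]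

lemma abs_le_sqrt_mul {x : ℝ} (hx : 0 ≤ x) :
    |x - 1| ≤ Real.sqrt (2*(x+2)/3) * Real.sqrt (x * Real.log x - x + 1) := by
  rw [← Real.sqrt_mul (by positivity), ← Real.sqrt_sq_eq_abs]
  apply Real.sqrt_le_sqrt
  nlinarith [key_ineq hx]

open MeasureTheory in
lemma pinsker_real {Ω : Type*} [MeasurableSpace Ω] (Q P : Measure Ω)
    [IsProbabilityMeasure Q] [IsProbabilityMeasure P]
    (hQP : Q ≪ P) (hint : Integrable (llr Q P) Q)
    (A : Set Ω) (hA : MeasurableSet A) :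
    0 ≤ ∫ ω, llr Q P ω ∂Q ∧
    (P A).toReal ≤ (Q A).toReal + Real.sqrt ((∫ ω, llr Q P ω ∂Q) / 2) := by
  classical
  set f : Ω → ℝ := fun ω => (Q.rnDeriv P ω).toReal with hf
  have hf_meas : Measurable f := (Measure.measurable_rnDeriv Q P).ennreal_toReal
  have hf_nonneg : ∀ ω, 0 ≤ f ω := fun ω => ENNReal.toReal_nonneg
  have hf_int : Integrable f P := Measure.integrable_toReal_rnDeriv
  have hf1 : ∫ ω, f ω ∂P = 1 := by
    rw [hf, Measure.integral_toReal_rnDeriv hQP]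
    simp
  -- KL as integral against P
  have hKL_eq : ∫ ω, llr Q P ω ∂Q = ∫ ω, f ω * Real.log (f ω) ∂P := by
    rw [← integral_rnDeriv_smul hQP (f := llr Q P)]
    refine integral_congr_ae (.of_forall fun ω => ?_)
    simp only [smul_eq_mul, llr, hf]
  have h_int_mul : Integrable (fun ω => f ω * Real.log (f ω)) P := by
    have := (integrable_rnDeriv_smul_iff hQP).mpr hint
    exact this
  set KL : ℝ := ∫ ω, llr Q P ω ∂Q with hKLdef
  -- phi integral
  have hsub2 : Integrable (fun ω => f ω * Real.log (f ω) - f ω) P := h_int_mul.sub hf_int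
  have hphi_int : Integrable (fun ω => f ω * Real.log (f ω) - f ω + 1) P :=
    hsub2.add (integrable_const 1)
  have hphi_nonneg : ∀ ω, 0 ≤ f ω * Real.log (f ω) - f ω + 1 :=
    fun ω => phi_nonneg (hf_nonneg ω)
  have hphi_integral : ∫ ω, (f ω * Real.log (f ω) - f ω + 1) ∂P = KL := by
    rw [integral_add hsub2 (integrable_const 1), integral_sub h_int_mul hf_int, hf1]
    simp only [integral_const, probReal_univ, measure_univ, ENNReal.toReal_one, smul_eq_mul, one_mul]
    rw [← hKL_eq]
    ring
  have hKL_nonneg : 0 ≤ KL := by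
    rw [← hphi_integral]
    exact integral_nonneg hphi_nonneg
  -- Cauchy-Schwarz
  have ha_int : Integrable (fun ω => 2*(f ω+2)/3) P := by
    apply Integrable.div_const
    exact ((hf_int.add (integrable_const 2)).const_mul 2)
  have ha_integral : ∫ ω, 2*(f ω+2)/3 ∂P = 2 := by
    rw [integral_div, integral_const_mul, integral_add hf_int (integrable_const 2), hf1]
    simp
    norm_num
  have hmeas1 : Measurable fun ω => Real.sqrt (2*(f ω+2)/3) :=
    Real.continuous_sqrt.measurable.comp (((hf_meas.add_const 2).const_mul 2).div_const 3)
  have hmeas2 : Measurable fun ω => Real.sqrt (f ω * Real.log (f ω) - f ω + 1) :=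
    Real.continuous_sqrt.measurable.comp
      (((hf_meas.mul (Real.measurable_log.comp hf_meas)).sub hf_meas).add_const 1)
  have hCS : ∫ ω, |f ω - 1| ∂P ≤ Real.sqrt 2 * Real.sqrt KL := by
    have hmem1 : MemLp (fun ω => Real.sqrt (2*(f ω+2)/3)) (ENNReal.ofReal 2) P := by
      rw [show ENNReal.ofReal 2 = 2 by norm_num]
      rw [memLp_two_iff_integrable_sq hmeas1.aestronglyMeasurable]
      refine ha_int.congr ?_
      exact .of_forall fun ω => (Real.sq_sqrt (by linarith [hf_nonneg ω])).symm
    have hmem2 : MemLp (fun ω => Real.sqrt (f ω * Real.log (f ω) - f ω + 1)) (ENNReal.ofReal 2) P := by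
      rw [show ENNReal.ofReal 2 = 2 by norm_num]
      rw [memLp_two_iff_integrable_sq hmeas2.aestronglyMeasurable]
      refine hphi_int.congr ?_
      exact .of_forall fun ω => (Real.sq_sqrt (hphi_nonneg ω)).symm
    have h22 : (2:ℝ).HolderConjugate 2 := ⟨by norm_num, by norm_num, by norm_num⟩
    have hHolder := integral_mul_le_Lp_mul_Lq_of_nonneg (μ := P) h22
      (Filter.Eventually.of_forall fun ω => Real.sqrt_nonneg _)
      (Filter.Eventually.of_forall fun ω => Real.sqrt_nonneg _) hmem1 hmem2
    have hrpow2 : ∀ y : ℝ, 0 ≤ y → (Real.sqrt y) ^ (2:ℝ) = y := fun y hy => by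
      rw [show ((2:ℝ)) = ((2:ℕ):ℝ) by norm_num, Real.rpow_natCast, Real.sq_sqrt hy]
    have hsq1 : ∫ ω, (Real.sqrt (2*(f ω+2)/3)) ^ (2:ℝ) ∂P = 2 := by
      refine Eq.trans (integral_congr_ae (.of_forall fun ω =>
        hrpow2 (2*(f ω+2)/3) (by linarith [hf_nonneg ω]))) ha_integral
    have hsq2 : ∫ ω, (Real.sqrt (f ω * Real.log (f ω) - f ω + 1)) ^ (2:ℝ) ∂P = KL := by
      refine Eq.trans (integral_congr_ae (.of_forall fun ω =>
        hrpow2 (f ω * Real.log (f ω) - f ω + 1) (hphi_nonneg ω))) hphi_integral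
    rw [hsq1, hsq2] at hHolder
    have habs_int : Integrable (fun ω => |f ω - 1|) P := (hf_int.sub (integrable_const 1)).abs
    have hprod_int : Integrable (fun ω => Real.sqrt (2*(f ω+2)/3)
        * Real.sqrt (f ω * Real.log (f ω) - f ω + 1)) P := by
      rw [← memLp_one_iff_integrable]
      have h2div : (2:ℝ≥0∞)/2 = 1 := ENNReal.div_self (by norm_num) (by norm_num)
      have hhalf : (1:ℝ≥0∞)/1 = 1/2 + 1/2 := by
        rw [ENNReal.div_add_div_same, one_add_one_eq_two, div_one]
        exact h2div.symm
      haveI : ENNReal.HolderTriple (ENNReal.ofReal 2) (ENNReal.ofReal 2) 1 :=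
        ⟨by rw [show ENNReal.ofReal 2 = 2 by norm_num, inv_one]; exact ENNReal.inv_two_add_inv_two⟩
      have := hmem2.smul (𝕜 := ℝ) hmem1 (r := 1)
      exact this
    have hptwise : ∀ ω, |f ω - 1| ≤ Real.sqrt (2*(f ω+2)/3)
        * Real.sqrt (f ω * Real.log (f ω) - f ω + 1) := fun ω => abs_le_sqrt_mul (hf_nonneg ω)
    calc ∫ ω, |f ω - 1| ∂P ≤ ∫ ω, Real.sqrt (2*(f ω+2)/3)
          * Real.sqrt (f ω * Real.log (f ω) - f ω + 1) ∂P :=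
        integral_mono habs_int hprod_int hptwise
      _ ≤ (2:ℝ) ^ (1/(2:ℝ)) * KL ^ (1/(2:ℝ)) := hHolder
      _ = Real.sqrt 2 * Real.sqrt KL := by
          rw [← Real.sqrt_eq_rpow, ← Real.sqrt_eq_rpow]
  -- total variation style bound
  have habs_int : Integrable (fun ω => |f ω - 1|) P := (hf_int.sub (integrable_const 1)).abs
  have hQA : (Q A).toReal = ∫ ω in A, f ω ∂P := (Measure.setIntegral_toReal_rnDeriv hQP A).symm
  have hQAc : (Q Aᶜ).toReal = ∫ ω in Aᶜ, f ω ∂P := (Measure.setIntegral_toReal_rnDeriv hQP Aᶜ).symm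
  have hPA : (P A).toReal = ∫ ω in A, (1:ℝ) ∂P := by simp; rfl
  have hPAc : (P Aᶜ).toReal = ∫ ω in Aᶜ, (1:ℝ) ∂P := by simp; rfl
  have hsub_int : Integrable (fun ω => 1 - f ω) P := (integrable_const 1).sub hf_int
  have hA1 : ∫ ω in A, (1 - f ω) ∂P = (P A).toReal - (Q A).toReal := by
    rw [integral_sub (integrableOn_const (C := (1:ℝ)) (measure_ne_top P A)) hf_int.integrableOn,
      hPA, hQA]
  have hAc1 : ∫ ω in Aᶜ, (1 - f ω) ∂P = (P Aᶜ).toReal - (Q Aᶜ).toReal := by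
    rw [integral_sub (integrableOn_const (C := (1:ℝ)) (measure_ne_top P Aᶜ)) hf_int.integrableOn,
      hPAc, hQAc]
  have hcomplP : (P Aᶜ).toReal = 1 - (P A).toReal := by
    have := prob_compl_eq_one_sub (μ := P) hA
    rw [this, ENNReal.toReal_sub_of_le (prob_le_one) ENNReal.one_ne_top]
    simp
  have hcomplQ : (Q Aᶜ).toReal = 1 - (Q A).toReal := by
    have := prob_compl_eq_one_sub (μ := Q) hA
    rw [this, ENNReal.toReal_sub_of_le (prob_le_one) ENNReal.one_ne_top]
    simp
  have bound1 : ∫ ω in A, (1 - f ω) ∂P ≤ ∫ ω in A, |f ω - 1| ∂P := by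
    refine setIntegral_mono_on hsub_int.integrableOn habs_int.integrableOn hA fun ω _ => ?_
    rw [abs_sub_comm]; exact le_abs_self _
  have bound2 : ∫ ω in Aᶜ, (f ω - 1) ∂P ≤ ∫ ω in Aᶜ, |f ω - 1| ∂P := by
    refine setIntegral_mono_on (hf_int.sub (integrable_const 1)).integrableOn
      habs_int.integrableOn hA.compl fun ω _ => le_abs_self _
  have hflip : ∫ ω in Aᶜ, (f ω - 1) ∂P = - ∫ ω in Aᶜ, (1 - f ω) ∂P := by
    rw [← integral_neg]
    exact integral_congr_ae (.of_forall fun ω => by ring)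
  have habs_split : ∫ ω in A, |f ω - 1| ∂P + ∫ ω in Aᶜ, |f ω - 1| ∂P
      = ∫ ω, |f ω - 1| ∂P := integral_add_compl hA habs_int
  have key : 2 * ((P A).toReal - (Q A).toReal) ≤ Real.sqrt 2 * Real.sqrt KL := by
    have e1 := bound1
    have e2 := bound2
    rw [hflip, hAc1, hcomplP, hcomplQ] at e2
    rw [hA1] at e1
    linarith [hCS, habs_split]
  have hdiv : Real.sqrt (KL/2) = Real.sqrt KL / Real.sqrt 2 := Real.sqrt_div hKL_nonneg 2
  have h2 : Real.sqrt 2 * Real.sqrt 2 = 2 := Real.mul_self_sqrt (by norm_num)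
  have h2pos : (0:ℝ) < Real.sqrt 2 := by positivity
  have hhalf : Real.sqrt 2 * Real.sqrt KL / 2 = Real.sqrt (KL/2) := by
    rw [hdiv]
    field_simp
    nlinarith [Real.sqrt_nonneg KL]
  exact ⟨hKL_nonneg, by linarith [key, hhalf]⟩

/-- Identification-term bound in the minimax lower-bound proof, via
Pinsker's inequality and concavity of the square root. -/
theorem identification_term_bound
    {Ω : Type*} [MeasurableSpace Ω] (K : ℕ) (hK : 0 < K)
    (Q : Measure Ω) [IsProbabilityMeasure Q]
    (P : Fin K → Measure Ω) [∀ h, IsProbabilityMeasure (P h)]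
    (A : Fin K → Set Ω) (hAmeas : ∀ h, MeasurableSet (A h))
    (hdisj : Pairwise (Function.onFun Disjoint A)) :
    (∑ h, P h (A h)) / (K : ℝ≥0∞)
      ≤ 1 / (K : ℝ≥0∞)
        + ((∑ h, klDiv Q (P h)) / (2 * (K : ℝ≥0∞))) ^ ((1 : ℝ) / 2) := by
  have hKtop : (2 : ℝ≥0∞) * K ≠ ⊤ := ENNReal.mul_ne_top (by norm_num) (ENNReal.natCast_ne_top K)
  by_cases hall : ∀ h, Q ≪ P h ∧ Integrable (llr Q (P h)) Q
  swap
  · obtain ⟨h0, hh0⟩ := not_forall.mp hall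
    have hsum : (∑ h, klDiv Q (P h)) = ⊤ :=
      ENNReal.sum_eq_top.mpr ⟨h0, Finset.mem_univ _, if_neg hh0⟩
    rw [hsum, ENNReal.top_div_of_ne_top hKtop, ENNReal.top_rpow_of_pos (by norm_num)]
    exact le_trans le_top (le_add_self)
  · set k : Fin K → ℝ := fun h => ∫ ω, llr Q (P h) ω ∂Q with hk
    have hkl : ∀ h, klDiv Q (P h) = ENNReal.ofReal (k h) := fun h => if_pos (hall h)
    have hpins := fun h => pinsker_real Q (P h) (hall h).1 (hall h).2 (A h) (hAmeas h)
    have hknn : ∀ h, 0 ≤ k h := fun h => (hpins h).1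
    set T : ℝ := ∑ h, k h with hT
    have hTnn : 0 ≤ T := Finset.sum_nonneg fun h _ => hknn h
    have hKpos : (0:ℝ) < K := by exact_mod_cast hK
    -- Q-sum bound
    have hQsum : ∑ h, (Q (A h)).toReal ≤ 1 := by
      have h1 : ∑ h, Q (A h) ≤ 1 := by
        rw [← tsum_fintype (L := .unconditional _), ← measure_iUnion hdisj hAmeas]
        exact prob_le_one
      have h2 : (∑ h, Q (A h)).toReal ≤ (1:ℝ≥0∞).toReal :=
        ENNReal.toReal_mono ENNReal.one_ne_top h1
      rwa [ENNReal.toReal_sum (fun h _ => measure_ne_top Q (A h)), ENNReal.toReal_one] at h2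
    -- Cauchy-Schwarz on the finite sum
    have hCSfin : ∑ h, Real.sqrt (k h / 2) ≤ (K:ℝ) * Real.sqrt (T / (2*K)) := by
      have h1 : (∑ h, Real.sqrt (k h / 2)) ^ 2 ≤ (K:ℝ) * ∑ h, (k h / 2) := by
        have := sq_sum_le_card_mul_sum_sq (s := (Finset.univ : Finset (Fin K)))
          (f := fun h => Real.sqrt (k h / 2))
        simp only [Finset.card_univ, Fintype.card_fin] at this
        refine le_trans this ?_
        gcongr with h _
        rw [Real.sq_sqrt (by linarith [hknn h])]
      have h2 : (K:ℝ) * ∑ h, (k h / 2) = (K:ℝ)^2 * (T / (2*K)) := by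
        rw [← Finset.sum_div, ← hT]
        field_simp
      calc ∑ h, Real.sqrt (k h / 2)
          = Real.sqrt ((∑ h, Real.sqrt (k h / 2))^2) :=
            (Real.sqrt_sq (Finset.sum_nonneg fun h _ => Real.sqrt_nonneg _)).symm
        _ ≤ Real.sqrt ((K:ℝ)^2 * (T / (2*K))) := by
            rw [← h2]; exact Real.sqrt_le_sqrt h1
        _ = (K:ℝ) * Real.sqrt (T / (2*K)) := by
            rw [Real.sqrt_mul (sq_nonneg _), Real.sqrt_sq hKpos.le]
    have hreal : ∑ h, (P h (A h)).toReal ≤ 1 + (K:ℝ) * Real.sqrt (T / (2*K)) := by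
      calc ∑ h, (P h (A h)).toReal
          ≤ ∑ h, ((Q (A h)).toReal + Real.sqrt (k h / 2)) :=
            Finset.sum_le_sum fun h _ => (hpins h).2
        _ = (∑ h, (Q (A h)).toReal) + ∑ h, Real.sqrt (k h / 2) := Finset.sum_add_distrib
        _ ≤ 1 + (K:ℝ) * Real.sqrt (T / (2*K)) := add_le_add hQsum hCSfin
    -- move to ENNReal
    have hsumP : ∑ h, P h (A h) = ENNReal.ofReal (∑ h, (P h (A h)).toReal) := by
      rw [ENNReal.ofReal_sum_of_nonneg (fun h _ => ENNReal.toReal_nonneg)]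
      exact Finset.sum_congr rfl fun h _ => (ENNReal.ofReal_toReal (measure_ne_top _ _)).symm
    have hsumkl : ∑ h, klDiv Q (P h) = ENNReal.ofReal T := by
      rw [hT, ENNReal.ofReal_sum_of_nonneg (fun h _ => hknn h)]
      exact Finset.sum_congr rfl fun h _ => hkl h
    have hK0 : (K : ℝ≥0∞) ≠ 0 := by exact_mod_cast hK.ne'
    have hKt : (K : ℝ≥0∞) ≠ ⊤ := ENNReal.natCast_ne_top K
    have hrpow_eq : ((∑ h, klDiv Q (P h)) / (2 * (K : ℝ≥0∞))) ^ ((1:ℝ)/2)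
        = ENNReal.ofReal (Real.sqrt (T / (2*K))) := by
      rw [hsumkl, show (2 * (K : ℝ≥0∞)) = ENNReal.ofReal (2*K) by
          rw [ENNReal.ofReal_mul (by norm_num)]
          simp [ENNReal.ofReal_natCast],
        ← ENNReal.ofReal_div_of_pos (by positivity),
        ENNReal.ofReal_rpow_of_nonneg (by positivity) (by norm_num),
        Real.sqrt_eq_rpow]
    rw [hrpow_eq, hsumP]
    calc ENNReal.ofReal (∑ h, (P h (A h)).toReal) / K
        ≤ ENNReal.ofReal (1 + (K:ℝ) * Real.sqrt (T / (2*K))) / K := by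
          exact ENNReal.div_le_div_right (ENNReal.ofReal_le_ofReal hreal) _
      _ = (1 + (K:ℝ≥0∞) * ENNReal.ofReal (Real.sqrt (T / (2*K)))) / K := by
          rw [ENNReal.ofReal_add (by norm_num) (by positivity),
            ENNReal.ofReal_mul hKpos.le]
          simp [ENNReal.ofReal_natCast]
      _ = 1 / K + (K:ℝ≥0∞) * ENNReal.ofReal (Real.sqrt (T / (2*K))) / K :=
          ENNReal.add_div
      _ = 1 / K + ENNReal.ofReal (Real.sqrt (T / (2*K))) := by
          rw [mul_div_assoc, ENNReal.mul_div_cancel hK0 hKt]
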